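/- Let H be a bialgebra, A an algebra in the category ℒℛ(H) of Yetter-Drinfeld-Long bimodules, and 𝒜 an H-bimodule algebra. Then 𝒜 ♮ A (the L-R-smash product of 𝒜 with A viewed as an H-bicomodule algebra) is itself an H-bimodule algebra with H-actions h·(φ ♮ a) = h₁·φ ♮ h₂·a and (φ ♮ a)·h = φ·h₂ ♮ a·h₁. -/

import Mathlib

open TensorProduct

noncomputable section

namespace LR

variable {k : Type*} [Field k]

section Toolbox

variable {X Y Z W X' Y' : Type*}
  [AddCommMonoid X] [Module k X] [AddCommMonoid Y] [Module k Y]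
  [AddCommMonoid Z] [Module k Z] [AddCommMonoid W] [Module k W]
  [AddCommMonoid X'] [Module k X'] [AddCommMonoid Y'] [Module k Y']

/-- Expand the first tensor factor using `f : X →ₗ X' ⊗ Y'`. -/
def expand (f : X →ₗ[k] X' ⊗[k] Y') : X ⊗[k] Z →ₗ[k] X' ⊗[k] (Y' ⊗[k] Z) :=
  (TensorProduct.assoc k X' Y' Z).toLinearMap ∘ₗ (TensorProduct.map f LinearMap.id)

/-- Apply `f` to the first two factors of a right-nested triple tensor. -/
def app2 (f : X ⊗[k] Y →ₗ[k] X' ⊗[k] Y') :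
    X ⊗[k] (Y ⊗[k] Z) →ₗ[k] X' ⊗[k] (Y' ⊗[k] Z) :=
  (TensorProduct.assoc k X' Y' Z).toLinearMap ∘ₗ (TensorProduct.map f LinearMap.id)
    ∘ₗ (TensorProduct.assoc k X Y Z).symm.toLinearMap

/-- Contract the first two factors of a right-nested triple tensor with `m`. -/
def con2 (m : X ⊗[k] Y →ₗ[k] W) : X ⊗[k] (Y ⊗[k] Z) →ₗ[k] W ⊗[k] Z :=
  (TensorProduct.map m LinearMap.id) ∘ₗ (TensorProduct.assoc k X Y Z).symm.toLinearMap

/-- Swap the first two factors of a right-nested triple tensor. -/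
def swL : X ⊗[k] (Y ⊗[k] Z) →ₗ[k] Y ⊗[k] (X ⊗[k] Z) :=
  (TensorProduct.assoc k Y X Z).toLinearMap
    ∘ₗ (TensorProduct.map (TensorProduct.comm k X Y).toLinearMap LinearMap.id)
    ∘ₗ (TensorProduct.assoc k X Y Z).symm.toLinearMap

/-- Exchange the second and third factors of `(X ⊗ Y) ⊗ Z`. -/
def ex23 : (X ⊗[k] Y) ⊗[k] Z →ₗ[k] (X ⊗[k] Z) ⊗[k] Y :=
  (TensorProduct.assoc k X Z Y).symm.toLinearMap
    ∘ₗ (TensorProduct.map LinearMap.id (TensorProduct.comm k Y Z).toLinearMap)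
    ∘ₗ (TensorProduct.assoc k X Y Z).toLinearMap

/-- The componentwise multiplication on a tensor product of two
(not necessarily unital) multiplications. -/
def tensMul (m₁ : X ⊗[k] X →ₗ[k] X) (m₂ : Y ⊗[k] Y →ₗ[k] Y) :
    (X ⊗[k] Y) ⊗[k] (X ⊗[k] Y) →ₗ[k] X ⊗[k] Y :=
  (TensorProduct.map m₁ m₂) ∘ₗ (tensorTensorTensorComm k X Y X Y).toLinearMap

end Toolbox

section LRPair

variable {A B : Type*} [AddCommMonoid A] [Module k A] [AddCommMonoid B] [Module k B]

/-- `x ⊗ y ↦ Σ x·a'_S ⊗ y_S` where `S(y ⊗ a') = a'_S ⊗ y_S`. -/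
def rext (mA : A ⊗[k] A →ₗ[k] A) (S : B ⊗[k] A →ₗ[k] A ⊗[k] B) (a' : A) :
    A ⊗[k] B →ₗ[k] A ⊗[k] B :=
  (TensorProduct.map mA LinearMap.id)
    ∘ₗ (TensorProduct.assoc k A A B).symm.toLinearMap
    ∘ₗ (TensorProduct.map LinearMap.id (S ∘ₗ (TensorProduct.mk k B A).flip a'))

/-- `x ⊗ y ↦ Σ x_S ⊗ b_S · y` where `S(b ⊗ x) = x_S ⊗ b_S`. -/
def lext (mB : B ⊗[k] B →ₗ[k] B) (S : B ⊗[k] A →ₗ[k] A ⊗[k] B) (b : B) :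
    A ⊗[k] B →ₗ[k] A ⊗[k] B :=
  (TensorProduct.map LinearMap.id mB)
    ∘ₗ (TensorProduct.assoc k A B B).toLinearMap
    ∘ₗ (TensorProduct.map (S ∘ₗ (TensorProduct.mk k B A) b) LinearMap.id)

/-- `x ⊗ y ↦ Σ a_S · x ⊗ y_S` where `S(a ⊗ y) = a_S ⊗ y_S`. -/
def qlext (mA : A ⊗[k] A →ₗ[k] A) (S : A ⊗[k] B →ₗ[k] A ⊗[k] B) (a : A) :
    A ⊗[k] B →ₗ[k] A ⊗[k] B :=
  (TensorProduct.map (mA ∘ₗ (TensorProduct.comm k A A).toLinearMap) LinearMap.id)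
    ∘ₗ (TensorProduct.assoc k A A B).symm.toLinearMap
    ∘ₗ (TensorProduct.map LinearMap.id (S ∘ₗ (TensorProduct.mk k A B) a))

/-- `x ⊗ y ↦ Σ x_S ⊗ y · b'_S` where `S(x ⊗ b') = x_S ⊗ b'_S`. -/
def qrext (mB : B ⊗[k] B →ₗ[k] B) (S : A ⊗[k] B →ₗ[k] A ⊗[k] B) (b' : B) :
    A ⊗[k] B →ₗ[k] A ⊗[k] B :=
  (TensorProduct.map LinearMap.id (mB ∘ₗ (TensorProduct.comm k B B).toLinearMap))
    ∘ₗ (TensorProduct.assoc k A B B).toLinearMap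
    ∘ₗ (TensorProduct.map (S ∘ₗ (TensorProduct.mk k A B).flip b') LinearMap.id)

/-- `x ⊗ y ↦ Σ y ⊗ S(x ⊗ b')`. -/
def swQ (S : A ⊗[k] B →ₗ[k] A ⊗[k] B) (b' : B) :
    A ⊗[k] B →ₗ[k] B ⊗[k] (A ⊗[k] B) :=
  (TensorProduct.map LinearMap.id S)
    ∘ₗ (TensorProduct.map LinearMap.id ((TensorProduct.mk k A B).flip b'))
    ∘ₗ (TensorProduct.comm k A B).toLinearMap

/-- `x ⊗ y ↦ Σ v ⊗ (u ⊗ y)` where `S(b ⊗ x) = u ⊗ v`. -/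
def swR (S : B ⊗[k] A →ₗ[k] A ⊗[k] B) (b : B) :
    A ⊗[k] B →ₗ[k] B ⊗[k] (A ⊗[k] B) :=
  (TensorProduct.assoc k B A B).toLinearMap
    ∘ₗ (TensorProduct.map (TensorProduct.comm k A B).toLinearMap LinearMap.id)
    ∘ₗ (TensorProduct.map (S ∘ₗ (TensorProduct.mk k B A) b) LinearMap.id)

/-- `x ⊗ y ↦ Σ x ⊗ (v ⊗ u)` where `S(a' ⊗ y) = u ⊗ v`. -/
def swQ2 (S : A ⊗[k] B →ₗ[k] A ⊗[k] B) (a' : A) :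
    A ⊗[k] B →ₗ[k] A ⊗[k] (B ⊗[k] A) :=
  TensorProduct.map LinearMap.id
    ((TensorProduct.comm k A B).toLinearMap ∘ₗ S ∘ₗ (TensorProduct.mk k A B) a')

/-- `x ⊗ y ↦ Σ u ⊗ (v ⊗ x)` where `S(y ⊗ a) = u ⊗ v`. -/
def swR2 (S : B ⊗[k] A →ₗ[k] A ⊗[k] B) (a : A) :
    A ⊗[k] B →ₗ[k] A ⊗[k] (B ⊗[k] A) :=
  (TensorProduct.assoc k A B A).toLinearMap
    ∘ₗ (TensorProduct.map (S ∘ₗ (TensorProduct.mk k B A).flip a) LinearMap.id)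
    ∘ₗ (TensorProduct.comm k A B).toLinearMap

/-- `(a ⊗ b) ⊗ (a' ⊗ b') ↦ (a ⊗ b') ⊗ (b ⊗ a')`. -/
def lrRearr : (A ⊗[k] B) ⊗[k] (A ⊗[k] B) →ₗ[k] (A ⊗[k] B) ⊗[k] (B ⊗[k] A) :=
  (tensorTensorTensorComm k A B B A).toLinearMap
    ∘ₗ (TensorProduct.map LinearMap.id (TensorProduct.comm k A B).toLinearMap)

/-- The multiplication of the L-R-twisted tensor product:
`(a ⊗ b)(a' ⊗ b') = a_Q a'_R ⊗ b_R b'_Q`. -/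
def lrMulGen (mA : A ⊗[k] A →ₗ[k] A) (mB : B ⊗[k] B →ₗ[k] B)
    (Q : A ⊗[k] B →ₗ[k] A ⊗[k] B) (R : B ⊗[k] A →ₗ[k] A ⊗[k] B) :
    (A ⊗[k] B) ⊗[k] (A ⊗[k] B) →ₗ[k] A ⊗[k] B :=
  (TensorProduct.map mA (mB ∘ₗ (TensorProduct.comm k B B).toLinearMap))
    ∘ₗ (tensorTensorTensorComm k A B A B).toLinearMap
    ∘ₗ (TensorProduct.map Q R) ∘ₗ lrRearr

/-- `R : B ⊗ A → A ⊗ B` is a twisting map (w.r.t. the given multiplications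
and units). -/
def IsTwistingMap (mA : A ⊗[k] A →ₗ[k] A) (mB : B ⊗[k] B →ₗ[k] B)
    (oneA : A) (oneB : B) (R : B ⊗[k] A →ₗ[k] A ⊗[k] B) : Prop :=
  (∀ a : A, R (oneB ⊗ₜ a) = a ⊗ₜ oneB) ∧
  (∀ b : B, R (b ⊗ₜ oneA) = oneA ⊗ₜ b) ∧
  (∀ (a a' : A) (b : B), R (b ⊗ₜ mA (a ⊗ₜ a')) = rext mA R a' (R (b ⊗ₜ a))) ∧
  (∀ (a : A) (b b' : B), R (mB (b ⊗ₜ b') ⊗ₜ a) = lext mB R b (R (b' ⊗ₜ a)))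

/-- The axioms of an L-R-twisted tensor product `A _Q⊗_R B`. -/
def IsLRPair (mA : A ⊗[k] A →ₗ[k] A) (mB : B ⊗[k] B →ₗ[k] B)
    (oneA : A) (oneB : B)
    (Q : A ⊗[k] B →ₗ[k] A ⊗[k] B) (R : B ⊗[k] A →ₗ[k] A ⊗[k] B) : Prop :=
  IsTwistingMap mA mB oneA oneB R ∧
  (∀ a : A, Q (a ⊗ₜ oneB) = a ⊗ₜ oneB) ∧
  (∀ b : B, Q (oneA ⊗ₜ b) = oneA ⊗ₜ b) ∧
  (∀ (a a' : A) (b : B), Q (mA (a ⊗ₜ a') ⊗ₜ b) = qlext mA Q a (Q (a' ⊗ₜ b))) ∧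
  (∀ (a : A) (b b' : B), Q (a ⊗ₜ mB (b ⊗ₜ b')) = qrext mB Q b' (Q (a ⊗ₜ b))) ∧
  (∀ (a : A) (b b' : B), swQ Q b' (R (b ⊗ₜ a)) = swR R b (Q (a ⊗ₜ b'))) ∧
  (∀ (a a' : A) (b : B), swQ2 Q a' (R (b ⊗ₜ a)) = swR2 R a (Q (a' ⊗ₜ b)))

end LRPair

end LR

namespace LR

section Bialg

variable {k : Type*} [Field k]
variable {H : Type*} [Ring H] [Bialgebra k H]
variable {M : Type*} [AddCommMonoid M] [Module k M]

/-- `(M, mM, oneM)` together with the two actions `la`, `ra` is an `H`-bimodule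
algebra. -/
def IsBimoduleAlgebra (mM : M ⊗[k] M →ₗ[k] M) (oneM : M)
    (la : H ⊗[k] M →ₗ[k] M) (ra : M ⊗[k] H →ₗ[k] M) : Prop :=
  (∀ m : M, la ((1 : H) ⊗ₜ m) = m) ∧
  (∀ (g h : H) (m : M), la ((g * h) ⊗ₜ m) = la (g ⊗ₜ la (h ⊗ₜ m))) ∧
  (∀ m : M, ra (m ⊗ₜ (1 : H)) = m) ∧
  (∀ (m : M) (g h : H), ra (m ⊗ₜ (g * h)) = ra (ra (m ⊗ₜ g) ⊗ₜ h)) ∧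
  (∀ (h : H) (m : M) (g : H), ra (la (h ⊗ₜ m) ⊗ₜ g) = la (h ⊗ₜ ra (m ⊗ₜ g))) ∧
  (∀ (h : H) (x y : M),
    la (h ⊗ₜ mM (x ⊗ₜ y)) =
      (mM ∘ₗ TensorProduct.map (la ∘ₗ (TensorProduct.mk k H M).flip x)
        (la ∘ₗ (TensorProduct.mk k H M).flip y)) (Coalgebra.comul (R := k) h)) ∧
  (∀ h : H, la (h ⊗ₜ oneM) = Coalgebra.counit (R := k) h • oneM) ∧
  (∀ (h : H) (x y : M),
    ra (mM (x ⊗ₜ y) ⊗ₜ h) =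
      (mM ∘ₗ TensorProduct.map (ra ∘ₗ (TensorProduct.mk k M H) x)
        (ra ∘ₗ (TensorProduct.mk k M H) y)) (Coalgebra.comul (R := k) h)) ∧
  (∀ h : H, ra (oneM ⊗ₜ h) = Coalgebra.counit (R := k) h • oneM)

/-- `(M, mM, oneM)` together with the two coactions `ρl`, `ρr` is an `H`-bicomodule
algebra. -/
def IsBicomoduleAlgebra (mM : M ⊗[k] M →ₗ[k] M) (oneM : M)
    (ρl : M →ₗ[k] H ⊗[k] M) (ρr : M →ₗ[k] M ⊗[k] H) : Prop :=
  (∀ m : M, (TensorProduct.lid k M)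
      ((TensorProduct.map (Coalgebra.counit (R := k)) LinearMap.id) (ρl m)) = m) ∧
  (∀ m : M, (TensorProduct.map (Coalgebra.comul (R := k)) LinearMap.id) (ρl m) =
      (TensorProduct.assoc k H H M).symm
        ((TensorProduct.map LinearMap.id ρl) (ρl m))) ∧
  (∀ m : M, (TensorProduct.rid k M)
      ((TensorProduct.map LinearMap.id (Coalgebra.counit (R := k))) (ρr m)) = m) ∧
  (∀ m : M, (TensorProduct.map LinearMap.id (Coalgebra.comul (R := k))) (ρr m) =
      (TensorProduct.assoc k M H H)
        ((TensorProduct.map ρr LinearMap.id) (ρr m))) ∧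
  (∀ m : M, (TensorProduct.map LinearMap.id ρr) (ρl m) =
      (TensorProduct.assoc k H M H)
        ((TensorProduct.map ρl LinearMap.id) (ρr m))) ∧
  (ρl oneM = (1 : H) ⊗ₜ oneM) ∧
  (∀ x y : M, ρl (mM (x ⊗ₜ y)) =
      tensMul (LinearMap.mul' k H) mM (ρl x ⊗ₜ ρl y)) ∧
  (ρr oneM = oneM ⊗ₜ (1 : H)) ∧
  (∀ x y : M, ρr (mM (x ⊗ₜ y)) =
      tensMul mM (LinearMap.mul' k H) (ρr x ⊗ₜ ρr y))

variable {P : Type*} [AddCommMonoid P] [Module k P]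

/-- `R(u ⊗ φ) = u_{[-1]}·φ ⊗ u_{[0]}` built from a left coaction on `P` and a left
action on `M`. -/
def smashR (la : H ⊗[k] M →ₗ[k] M) (ρl : P →ₗ[k] H ⊗[k] P) :
    P ⊗[k] M →ₗ[k] M ⊗[k] P :=
  (TensorProduct.map la LinearMap.id) ∘ₗ ex23 ∘ₗ (TensorProduct.map ρl LinearMap.id)

/-- `Q(φ ⊗ u) = φ·u_{<1>} ⊗ u_{<0>}` built from a right coaction on `P` and a right
action on `M`. -/
def smashQ (ra : M ⊗[k] H →ₗ[k] M) (ρr : P →ₗ[k] P ⊗[k] H) :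
    M ⊗[k] P →ₗ[k] M ⊗[k] P :=
  (TensorProduct.map ra LinearMap.id)
    ∘ₗ (TensorProduct.assoc k M H P).symm.toLinearMap
    ∘ₗ (TensorProduct.map LinearMap.id
        ((TensorProduct.comm k P H).toLinearMap ∘ₗ ρr))

/-- `R(h ⊗ m) = δ(h)₁ · m ⊗ δ(h)₂` (the smash-product twisting map associated to a
comultiplication-like map `δ`). -/
def RsmashGen (la : H ⊗[k] M →ₗ[k] M) (δ : H →ₗ[k] H ⊗[k] H) :
    H ⊗[k] M →ₗ[k] M ⊗[k] H :=
  (TensorProduct.map la LinearMap.id) ∘ₗ ex23 ∘ₗ (TensorProduct.map δ LinearMap.id)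

/-- `Q(m ⊗ h) = m · δ(h)₂ ⊗ δ(h)₁`. -/
def QsmashGen (ra : M ⊗[k] H →ₗ[k] M) (δ : H →ₗ[k] H ⊗[k] H) :
    M ⊗[k] H →ₗ[k] M ⊗[k] H :=
  (TensorProduct.map ra LinearMap.id)
    ∘ₗ (TensorProduct.assoc k M H H).symm.toLinearMap
    ∘ₗ (TensorProduct.map LinearMap.id ((TensorProduct.comm k H H).toLinearMap ∘ₗ δ))

end Bialg

end LR

namespace LR

section YDL

variable {k : Type*} [Field k]
variable {H : Type*} [Ring H] [Bialgebra k H]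
variable {A : Type*} [Ring A] [Algebra k A]
variable {𝒜 : Type*} [Ring 𝒜] [Algebra k 𝒜]

/-- `A` is an algebra in the category `ℒℛ(H)` of Yetter-Drinfeld-Long bimodules:
it is an `H`-bimodule algebra and an `H`-bicomodule algebra, and the four
Yetter-Drinfeld/Long compatibility conditions hold. -/
def IsYDLAlgebra (la : H ⊗[k] A →ₗ[k] A) (ra : A ⊗[k] H →ₗ[k] A)
    (ρl : A →ₗ[k] H ⊗[k] A) (ρr : A →ₗ[k] A ⊗[k] H) : Prop :=
  IsBimoduleAlgebra (LinearMap.mul' k A) (1 : A) la ra ∧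
  IsBicomoduleAlgebra (LinearMap.mul' k A) (1 : A) ρl ρr ∧
  -- left-left Yetter-Drinfeld
  (∀ (h : H) (m : A),
    (TensorProduct.map (LinearMap.mul' k H) LinearMap.id)
        (ex23 ((TensorProduct.map (ρl ∘ₗ la ∘ₗ (TensorProduct.mk k H A).flip m)
          LinearMap.id) (Coalgebra.comul (R := k) h))) =
      (TensorProduct.map (LinearMap.mul' k H) la)
        ((tensorTensorTensorComm k H H H A)
          ((Coalgebra.comul (R := k) h) ⊗ₜ[k] (ρl m)))) ∧
  -- left-right Long
  (∀ (h : H) (m : A),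
    ρr (la (h ⊗ₜ m)) =
      (TensorProduct.map (la ∘ₗ (TensorProduct.mk k H A) h) LinearMap.id) (ρr m)) ∧
  -- right-right Yetter-Drinfeld
  (∀ (h : H) (m : A),
    (TensorProduct.comm k H A)
        ((TensorProduct.map (LinearMap.mul' k H) LinearMap.id)
          ((TensorProduct.assoc k H H A).symm
            ((TensorProduct.map LinearMap.id
                ((TensorProduct.comm k A H).toLinearMap ∘ₗ ρr ∘ₗ ra
                  ∘ₗ (TensorProduct.mk k A H) m))
              (Coalgebra.comul (R := k) h)))) =
      (TensorProduct.map ra (LinearMap.mul' k H))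
        ((tensorTensorTensorComm k A H H H)
          ((ρr m) ⊗ₜ[k] (Coalgebra.comul (R := k) h)))) ∧
  -- right-left Long
  (∀ (m : A) (h : H),
    ρl (ra (m ⊗ₜ h)) =
      (TensorProduct.map LinearMap.id (ra ∘ₗ (TensorProduct.mk k A H).flip h)) (ρl m))

/-- the left `H`-action `h·(φ ♮ a) = h₁·φ ♮ h₂·a` on `𝒜 ⊗ A`. -/
def Lact (la𝒜 : H ⊗[k] 𝒜 →ₗ[k] 𝒜) (laA : H ⊗[k] A →ₗ[k] A) :
    H ⊗[k] (𝒜 ⊗[k] A) →ₗ[k] 𝒜 ⊗[k] A :=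
  (TensorProduct.map la𝒜 laA) ∘ₗ (tensorTensorTensorComm k H H 𝒜 A).toLinearMap
    ∘ₗ (TensorProduct.map (Coalgebra.comul (R := k)) LinearMap.id)

/-- the right `H`-action `(φ ♮ a)·h = φ·h₂ ♮ a·h₁` on `𝒜 ⊗ A`. -/
def Ract (ra𝒜 : 𝒜 ⊗[k] H →ₗ[k] 𝒜) (raA : A ⊗[k] H →ₗ[k] A) :
    (𝒜 ⊗[k] A) ⊗[k] H →ₗ[k] 𝒜 ⊗[k] A :=
  (TensorProduct.map ra𝒜 raA) ∘ₗ (tensorTensorTensorComm k 𝒜 A H H).toLinearMap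
    ∘ₗ (TensorProduct.map LinearMap.id
        ((TensorProduct.comm k H H).toLinearMap ∘ₗ (Coalgebra.comul (R := k))))

/-- the left `H`-coaction `λ(a ♮ h) = a^{(-1)}h₁ ⊗ (a^{(0)} ♮ h₂)` on `A ⊗ H`. -/
def lamAH (ρlA : A →ₗ[k] H ⊗[k] A) : A ⊗[k] H →ₗ[k] H ⊗[k] (A ⊗[k] H) :=
  (TensorProduct.map (LinearMap.mul' k H) LinearMap.id)
    ∘ₗ (tensorTensorTensorComm k H A H H).toLinearMap
    ∘ₗ (TensorProduct.map ρlA (Coalgebra.comul (R := k)))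

/-- the right `H`-coaction `ρ(a ♮ h) = (a^{<0>} ♮ h₁) ⊗ h₂a^{<1>}` on `A ⊗ H`. -/
def rhoAH (ρrA : A →ₗ[k] A ⊗[k] H) : A ⊗[k] H →ₗ[k] (A ⊗[k] H) ⊗[k] H :=
  (TensorProduct.map LinearMap.id
      ((LinearMap.mul' k H) ∘ₗ (TensorProduct.comm k H H).toLinearMap))
    ∘ₗ (tensorTensorTensorComm k A H H H).toLinearMap
    ∘ₗ (TensorProduct.map ρrA (Coalgebra.comul (R := k)))

end YDL

end LR


namespace LR

set_option maxHeartbeats 2000000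
set_option synthInstance.maxHeartbeats 400000

section SweedlerAux

variable {k : Type*} [Field k]
variable {H : Type*} [Ring H] [Bialgebra k H]

/-- representation of `comul 1`. -/
def reprOne : Coalgebra.Repr k (1 : H) Unit where
  index := {()}
  left _ := 1
  right _ := 1
  eq := by simp [Algebra.TensorProduct.one_def]

/-- representation of `comul (g*h)` from representations of `comul g`, `comul h`. -/
def reprMul {ι κ : Type*} {g h : H} (rg : Coalgebra.Repr k g ι) (rh : Coalgebra.Repr k h κ) :
    Coalgebra.Repr k (g * h) (ι × κ) where
  index := rg.index ×ˢ rh.index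
  left p := rg.left p.1 * rh.left p.2
  right p := rg.right p.1 * rh.right p.2
  eq := by
    rw [Bialgebra.comul_mul, ← rg.eq, ← rh.eq, Finset.sum_mul_sum]
    rw [Finset.sum_product]
    simp [Algebra.TensorProduct.tmul_mul_tmul]


@[simp] lemma reprOne_index : (reprOne (k := k) (H := H)).index = {()} := rfl
@[simp] lemma reprOne_left (i : Unit) : (reprOne (k := k) (H := H)).left i = 1 := rfl
@[simp] lemma reprOne_right (i : Unit) : (reprOne (k := k) (H := H)).right i = 1 := rfl

@[simp] lemma reprMul_index {ι κ : Type*} {g h : H} (rg : Coalgebra.Repr k g ι) (rh : Coalgebra.Repr k h κ) :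
    (reprMul rg rh).index = rg.index ×ˢ rh.index := rfl
@[simp] lemma reprMul_left {ι κ : Type*} {g h : H} (rg : Coalgebra.Repr k g ι) (rh : Coalgebra.Repr k h κ)
    (p : rg.ι × rh.ι) : (reprMul rg rh).left p = rg.left p.1 * rh.left p.2 := rfl
@[simp] lemma reprMul_right {ι κ : Type*} {g h : H} (rg : Coalgebra.Repr k g ι) (rh : Coalgebra.Repr k h κ)
    (p : rg.ι × rh.ι) : (reprMul rg rh).right p = rg.right p.1 * rh.right p.2 := rfl

lemma sum_counit_smul {V : Type*} [AddCommMonoid V] [Module k V]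
    (F : H →ₗ[k] V) {ι : Type*} {h : H} (r : Coalgebra.Repr k h ι) :
    ∑ i ∈ r.index, Coalgebra.counit (R := k) (r.left i) • F (r.right i) = F h := by
  have h1 := Coalgebra.sum_counit_tmul_eq (R := k) r
  calc ∑ i ∈ r.index, Coalgebra.counit (R := k) (r.left i) • F (r.right i)
      = (F ∘ₗ (TensorProduct.lid k H).toLinearMap)
          (∑ i ∈ r.index, Coalgebra.counit (R := k) (r.left i) ⊗ₜ r.right i) := by
        rw [map_sum]
        refine Finset.sum_congr rfl fun i _ => ?_
        simp
    _ = F h := by rw [h1]; simp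

lemma sum_smul_counit {V : Type*} [AddCommMonoid V] [Module k V]
    (F : H →ₗ[k] V) {ι : Type*} {h : H} (r : Coalgebra.Repr k h ι) :
    ∑ i ∈ r.index, Coalgebra.counit (R := k) (r.right i) • F (r.left i) = F h := by
  have h1 := Coalgebra.sum_tmul_counit_eq (R := k) r
  calc ∑ i ∈ r.index, Coalgebra.counit (R := k) (r.right i) • F (r.left i)
      = (F ∘ₗ (TensorProduct.rid k H).toLinearMap)
          (∑ i ∈ r.index, r.left i ⊗ₜ Coalgebra.counit (R := k) (r.right i)) := by
        rw [map_sum]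
        refine Finset.sum_congr rfl fun i _ => ?_
        simp
    _ = F h := by rw [h1]; simp

/-- Master reassociation lemma: two ways of producing the four-fold Sweedler
legs of `h` give equal sums. -/
lemma shape_swap {V : Type*} [AddCommMonoid V] [Module k V]
    (Φ : H ⊗[k] (H ⊗[k] (H ⊗[k] H)) →ₗ[k] V) {h : H}
    {ι₀ : Type*} {ιl ιr : ι₀ → Type*} {ιm : ∀ i, ιr i → Type*}
    (r : Coalgebra.Repr k h ι₀)
    (rl : ∀ i : r.ι, Coalgebra.Repr k (r.left i) (ιl i))
    (rr : ∀ i : r.ι, Coalgebra.Repr k (r.right i) (ιr i))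
    (rm : ∀ (i : r.ι) (j : (rr i).ι), Coalgebra.Repr k ((rr i).left j) (ιm i j)) :
    ∑ i ∈ r.index, ∑ j ∈ (rl i).index, ∑ j' ∈ (rr i).index,
      Φ ((rl i).left j ⊗ₜ ((rl i).right j ⊗ₜ ((rr i).left j' ⊗ₜ (rr i).right j')))
    = ∑ i ∈ r.index, ∑ j ∈ (rr i).index, ∑ m ∈ (rm i j).index,
      Φ (r.left i ⊗ₜ ((rm i j).left m ⊗ₜ ((rm i j).right m ⊗ₜ (rr i).right j))) := by
  have key :
      (∑ i ∈ r.index, ∑ j ∈ (rl i).index, ∑ j' ∈ (rr i).index,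
        ((rl i).left j ⊗ₜ ((rl i).right j ⊗ₜ ((rr i).left j' ⊗ₜ (rr i).right j'))
          : H ⊗[k] (H ⊗[k] (H ⊗[k] H))))
      = ∑ i ∈ r.index, ∑ j ∈ (rr i).index, ∑ m ∈ (rm i j).index,
        (r.left i ⊗ₜ ((rm i j).left m ⊗ₜ ((rm i j).right m ⊗ₜ (rr i).right j))) := by
    set L3 : H ⊗[k] (H ⊗[k] H) →ₗ[k] H ⊗[k] (H ⊗[k] (H ⊗[k] H)) :=
      LinearMap.lTensor H (LinearMap.lTensor H (Coalgebra.comul (R := k))) with hL3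
    have step1 :
        (∑ i ∈ r.index, ∑ j ∈ (rl i).index, ∑ j' ∈ (rr i).index,
          ((rl i).left j ⊗ₜ ((rl i).right j ⊗ₜ ((rr i).left j' ⊗ₜ (rr i).right j'))
            : H ⊗[k] (H ⊗[k] (H ⊗[k] H))))
        = L3 (∑ i ∈ r.index, ∑ j ∈ (rl i).index,
            ((rl i).left j ⊗ₜ ((rl i).right j ⊗ₜ r.right i))) := by
      rw [map_sum]
      refine Finset.sum_congr rfl fun i _ => ?_
      rw [map_sum]
      refine Finset.sum_congr rfl fun j _ => ?_
      rw [hL3]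
      simp only [LinearMap.lTensor_tmul]
      rw [← (rr i).eq]
      simp [tmul_sum]
    have step2 :
        (∑ i ∈ r.index, ∑ j ∈ (rl i).index,
          ((rl i).left j ⊗ₜ ((rl i).right j ⊗ₜ r.right i) : H ⊗[k] (H ⊗[k] H)))
        = (TensorProduct.assoc k H H H)
            ((LinearMap.rTensor H (Coalgebra.comul (R := k)))
              (Coalgebra.comul (R := k) h)) := by
      rw [← r.eq, map_sum, map_sum]
      refine Finset.sum_congr rfl fun i _ => ?_
      rw [LinearMap.rTensor_tmul, ← (rl i).eq]
      simp [sum_tmul]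
    have step3 :
        (∑ i ∈ r.index, ∑ j ∈ (rr i).index, ∑ m ∈ (rm i j).index,
          (r.left i ⊗ₜ ((rm i j).left m ⊗ₜ ((rm i j).right m ⊗ₜ (rr i).right j))
            : H ⊗[k] (H ⊗[k] (H ⊗[k] H))))
        = L3 ((TensorProduct.assoc k H H H)
            ((LinearMap.rTensor H (Coalgebra.comul (R := k)))
              (Coalgebra.comul (R := k) h))) := by
      rw [Coalgebra.coassoc_apply, ← r.eq, map_sum, map_sum]
      refine Finset.sum_congr rfl fun i _ => ?_
      rw [LinearMap.lTensor_tmul, hL3, LinearMap.lTensor_tmul,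
        ← Coalgebra.coassoc_apply, ← (rr i).eq]
      rw [map_sum, map_sum, tmul_sum]
      refine Finset.sum_congr rfl fun j _ => ?_
      rw [LinearMap.rTensor_tmul, ← (rm i j).eq]
      simp [sum_tmul, tmul_sum]
    rw [step1, step2, step3]
  calc
    ∑ i ∈ r.index, ∑ j ∈ (rl i).index, ∑ j' ∈ (rr i).index,
      Φ ((rl i).left j ⊗ₜ ((rl i).right j ⊗ₜ ((rr i).left j' ⊗ₜ (rr i).right j')))
      = Φ (∑ i ∈ r.index, ∑ j ∈ (rl i).index, ∑ j' ∈ (rr i).index,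
        ((rl i).left j ⊗ₜ ((rl i).right j ⊗ₜ ((rr i).left j' ⊗ₜ (rr i).right j')))) := by
      simp [map_sum]
    _ = _ := by rw [key]; simp [map_sum]

/-- move an independent sum past three (possibly dependent) sums. -/
lemma sum_comm3 {β V : Type*} [AddCommMonoid V] {ι₁ : Type*} {ι₂ : ι₁ → Type*}
    {ι₃ : ι₁ → Type*}
    (S : Finset β) (s₁ : Finset ι₁) (s₂ : ∀ i, Finset (ι₂ i)) (s₃ : ∀ i, Finset (ι₃ i))
    (F : β → (i : ι₁) → ι₂ i → ι₃ i → V) :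
    ∑ u ∈ S, ∑ i ∈ s₁, ∑ j ∈ s₂ i, ∑ l ∈ s₃ i, F u i j l
    = ∑ i ∈ s₁, ∑ j ∈ s₂ i, ∑ l ∈ s₃ i, ∑ u ∈ S, F u i j l := by
  rw [Finset.sum_comm]
  exact Finset.sum_congr rfl fun i _ => by
    rw [Finset.sum_comm]
    exact Finset.sum_congr rfl fun j _ => Finset.sum_comm

end SweedlerAux

section GadgetAux

variable {k : Type*} [Field k]
variable {H : Type*} [Ring H] [Bialgebra k H]
variable {A : Type*} [Ring A] [Algebra k A]
variable {𝒜 : Type*} [Ring 𝒜] [Algebra k 𝒜]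
variable (la𝒜 : H ⊗[k] 𝒜 →ₗ[k] 𝒜) (ra𝒜 : 𝒜 ⊗[k] H →ₗ[k] 𝒜)
variable (laA : H ⊗[k] A →ₗ[k] A) (raA : A ⊗[k] H →ₗ[k] A)
variable (ρlA : A →ₗ[k] H ⊗[k] A) (ρrA : A →ₗ[k] A ⊗[k] H)

lemma Lact_tmul {ι : Type*} {h : H} (r : Coalgebra.Repr k h ι) (φ : 𝒜) (a : A) :
    Lact la𝒜 laA (h ⊗ₜ (φ ⊗ₜ a)) =
      ∑ i ∈ r.index, la𝒜 (r.left i ⊗ₜ φ) ⊗ₜ laA (r.right i ⊗ₜ a) := by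
  simp only [Lact, LinearMap.comp_apply, TensorProduct.map_tmul, LinearMap.id_coe, id_eq,
    LinearEquiv.coe_coe]
  rw [← r.eq]
  simp [sum_tmul, map_sum]

lemma Ract_tmul {ι : Type*} {h : H} (r : Coalgebra.Repr k h ι) (φ : 𝒜) (a : A) :
    Ract ra𝒜 raA ((φ ⊗ₜ a) ⊗ₜ h) =
      ∑ i ∈ r.index, ra𝒜 (φ ⊗ₜ r.right i) ⊗ₜ raA (a ⊗ₜ r.left i) := by
  simp only [Ract, LinearMap.comp_apply, TensorProduct.map_tmul, LinearMap.id_coe, id_eq,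
    LinearEquiv.coe_coe]
  rw [← r.eq]
  simp [tmul_sum, map_sum]

lemma Lact_tmul_mul (g h : H) {ι κ : Type*} (rg : Coalgebra.Repr k g ι) (rh : Coalgebra.Repr k h κ)
    (φ : 𝒜) (a : A) :
    Lact la𝒜 laA ((g * h) ⊗ₜ (φ ⊗ₜ a)) =
      ∑ i ∈ rg.index, ∑ j ∈ rh.index,
        la𝒜 ((rg.left i * rh.left j) ⊗ₜ φ) ⊗ₜ laA ((rg.right i * rh.right j) ⊗ₜ a) := by
  simp only [Lact, LinearMap.comp_apply, TensorProduct.map_tmul, LinearMap.id_coe, id_eq,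
    LinearEquiv.coe_coe]
  rw [Bialgebra.comul_mul, ← rg.eq, ← rh.eq, Finset.sum_mul_sum]
  simp [Algebra.TensorProduct.tmul_mul_tmul, sum_tmul, map_sum]

lemma Ract_tmul_mul (g h : H) {ι κ : Type*} (rg : Coalgebra.Repr k g ι) (rh : Coalgebra.Repr k h κ)
    (φ : 𝒜) (a : A) :
    Ract ra𝒜 raA ((φ ⊗ₜ a) ⊗ₜ (g * h)) =
      ∑ i ∈ rg.index, ∑ j ∈ rh.index,
        ra𝒜 (φ ⊗ₜ (rg.right i * rh.right j)) ⊗ₜ raA (a ⊗ₜ (rg.left i * rh.left j)) := by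
  simp only [Ract, LinearMap.comp_apply, TensorProduct.map_tmul, LinearMap.id_coe, id_eq,
    LinearEquiv.coe_coe]
  rw [Bialgebra.comul_mul, ← rg.eq, ← rh.eq, Finset.sum_mul_sum]
  simp [Algebra.TensorProduct.tmul_mul_tmul, tmul_sum, map_sum]

lemma mulform_left {M : Type*} [AddCommMonoid M] [Module k M] (mM : M ⊗[k] M →ₗ[k] M)
    (la : H ⊗[k] M →ₗ[k] M) {ι : Type*} {h : H} (r : Coalgebra.Repr k h ι) (x y : M) :
    (mM ∘ₗ TensorProduct.map (la ∘ₗ (TensorProduct.mk k H M).flip x)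
        (la ∘ₗ (TensorProduct.mk k H M).flip y)) (Coalgebra.comul (R := k) h)
    = ∑ i ∈ r.index, mM (la (r.left i ⊗ₜ x) ⊗ₜ la (r.right i ⊗ₜ y)) := by
  rw [← r.eq]
  simp [map_sum]

lemma mulform_right {M : Type*} [AddCommMonoid M] [Module k M] (mM : M ⊗[k] M →ₗ[k] M)
    (ra : M ⊗[k] H →ₗ[k] M) {ι : Type*} {h : H} (r : Coalgebra.Repr k h ι) (x y : M) :
    (mM ∘ₗ TensorProduct.map (ra ∘ₗ (TensorProduct.mk k M H) x)
        (ra ∘ₗ (TensorProduct.mk k M H) y)) (Coalgebra.comul (R := k) h)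
    = ∑ i ∈ r.index, mM (ra (x ⊗ₜ r.left i) ⊗ₜ ra (y ⊗ₜ r.right i)) := by
  rw [← r.eq]
  simp [map_sum]

lemma mulSmash {ι κ : Type*} (s : Finset ι) (t : Finset κ)
    (f₁ : ι → H) (f₂ : ι → A) (g₁ : κ → A) (g₂ : κ → H)
    (α β : 𝒜) (c d : A)
    (hc : ρlA c = ∑ i ∈ s, f₁ i ⊗ₜ f₂ i) (hd : ρrA d = ∑ j ∈ t, g₁ j ⊗ₜ g₂ j) :
    lrMulGen (LinearMap.mul' k 𝒜) (LinearMap.mul' k A) (smashQ ra𝒜 ρrA) (smashR la𝒜 ρlA)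
      ((α ⊗ₜ c) ⊗ₜ (β ⊗ₜ d))
    = ∑ i ∈ s, ∑ j ∈ t, (ra𝒜 (α ⊗ₜ g₂ j) * la𝒜 (f₁ i ⊗ₜ β)) ⊗ₜ (f₂ i * g₁ j) := by
  simp only [lrMulGen, lrRearr, smashQ, smashR, ex23, LinearMap.comp_apply,
    TensorProduct.map_tmul, LinearMap.id_coe, id_eq, LinearEquiv.coe_coe,
    TensorProduct.comm_tmul, TensorProduct.assoc_tmul, TensorProduct.assoc_symm_tmul,
    tensorTensorTensorComm_tmul]
  rw [hc, hd]
  simp [map_sum, sum_tmul, tmul_sum, TensorProduct.assoc_symm_tmul]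

/-- The left-left Yetter-Drinfeld "LHS" operator. -/
def FydL (a : A) : H ⊗[k] H →ₗ[k] H ⊗[k] A :=
  (TensorProduct.map (LinearMap.mul' k H) LinearMap.id) ∘ₗ ex23
    ∘ₗ (TensorProduct.map (ρlA ∘ₗ laA ∘ₗ (TensorProduct.mk k H A).flip a) LinearMap.id)

/-- The left-left Yetter-Drinfeld "RHS" operator. -/
def GydL (a : A) : H ⊗[k] H →ₗ[k] H ⊗[k] A :=
  (TensorProduct.map (LinearMap.mul' k H) laA)
    ∘ₗ (tensorTensorTensorComm k H H H A).toLinearMap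
    ∘ₗ (TensorProduct.mk k (H ⊗[k] H) (H ⊗[k] A)).flip (ρlA a)

/-- The right-right Yetter-Drinfeld "LHS" operator. -/
def FydR (a' : A) : H ⊗[k] H →ₗ[k] A ⊗[k] H :=
  (TensorProduct.comm k H A).toLinearMap
    ∘ₗ (TensorProduct.map (LinearMap.mul' k H) LinearMap.id)
    ∘ₗ (TensorProduct.assoc k H H A).symm.toLinearMap
    ∘ₗ (TensorProduct.map LinearMap.id
        ((TensorProduct.comm k A H).toLinearMap ∘ₗ ρrA ∘ₗ raA ∘ₗ (TensorProduct.mk k A H) a'))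

/-- The right-right Yetter-Drinfeld "RHS" operator. -/
def GydR (a' : A) : H ⊗[k] H →ₗ[k] A ⊗[k] H :=
  (TensorProduct.map raA (LinearMap.mul' k H))
    ∘ₗ (tensorTensorTensorComm k A H H H).toLinearMap
    ∘ₗ (TensorProduct.mk k (A ⊗[k] H) (H ⊗[k] H)) (ρrA a')

lemma FydL_comul_eq (a : A)
    (hyd : ∀ (h : H) (m : A),
      (TensorProduct.map (LinearMap.mul' k H) LinearMap.id)
          (ex23 ((TensorProduct.map (ρlA ∘ₗ laA ∘ₗ (TensorProduct.mk k H A).flip m)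
            LinearMap.id) (Coalgebra.comul (R := k) h))) =
        (TensorProduct.map (LinearMap.mul' k H) laA)
          ((tensorTensorTensorComm k H H H A)
            ((Coalgebra.comul (R := k) h) ⊗ₜ[k] (ρlA m)))) (h : H) :
    FydL laA ρlA a (Coalgebra.comul (R := k) h)
      = GydL laA ρlA a (Coalgebra.comul (R := k) h) := by
  simpa [FydL, GydL, LinearMap.comp_apply] using hyd h a

lemma FydR_comul_eq (a' : A)
    (hyd : ∀ (h : H) (m : A),
      (TensorProduct.comm k H A)
          ((TensorProduct.map (LinearMap.mul' k H) LinearMap.id)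
            ((TensorProduct.assoc k H H A).symm
              ((TensorProduct.map LinearMap.id
                  ((TensorProduct.comm k A H).toLinearMap ∘ₗ ρrA ∘ₗ raA
                    ∘ₗ (TensorProduct.mk k A H) m))
                (Coalgebra.comul (R := k) h)))) =
        (TensorProduct.map raA (LinearMap.mul' k H))
          ((tensorTensorTensorComm k A H H H)
            ((ρrA m) ⊗ₜ[k] (Coalgebra.comul (R := k) h)))) (h : H) :
    FydR raA ρrA a' (Coalgebra.comul (R := k) h)
      = GydR raA ρrA a' (Coalgebra.comul (R := k) h) := by
  simpa [FydR, GydR, LinearMap.comp_apply] using hyd h a'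

lemma FydL_tmul {ι : Type*} (s : Finset ι) (f₁ : ι → H) (f₂ : ι → A) (a : A) (x y : H)
    (hrepr : ρlA (laA (x ⊗ₜ a)) = ∑ i ∈ s, f₁ i ⊗ₜ f₂ i) :
    FydL laA ρlA a (x ⊗ₜ y) = ∑ i ∈ s, (f₁ i * y) ⊗ₜ f₂ i := by
  simp only [FydL, ex23, LinearMap.comp_apply, TensorProduct.map_tmul, LinearMap.id_coe,
    id_eq, LinearEquiv.coe_coe, TensorProduct.mk_apply, LinearMap.flip_apply]
  rw [hrepr]
  simp [sum_tmul, map_sum]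

lemma GydL_tmul {ι : Type*} (s : Finset ι) (f₁ : ι → H) (f₂ : ι → A) (a : A) (x y : H)
    (hs : ρlA a = ∑ i ∈ s, f₁ i ⊗ₜ f₂ i) :
    GydL laA ρlA a (x ⊗ₜ y) = ∑ i ∈ s, (x * f₁ i) ⊗ₜ laA (y ⊗ₜ f₂ i) := by
  simp only [GydL, LinearMap.comp_apply, LinearEquiv.coe_coe, TensorProduct.mk_apply,
    LinearMap.flip_apply]
  rw [hs]
  simp [tmul_sum, map_sum]

lemma FydR_tmul {κ : Type*} (t : Finset κ) (g₁ : κ → A) (g₂ : κ → H) (a' : A) (x y : H)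
    (hrepr : ρrA (raA (a' ⊗ₜ y)) = ∑ j ∈ t, g₁ j ⊗ₜ g₂ j) :
    FydR raA ρrA a' (x ⊗ₜ y) = ∑ j ∈ t, g₁ j ⊗ₜ (x * g₂ j) := by
  simp only [FydR, LinearMap.comp_apply, TensorProduct.map_tmul, LinearMap.id_coe, id_eq,
    LinearEquiv.coe_coe, TensorProduct.mk_apply]
  rw [hrepr]
  simp [tmul_sum, map_sum]

lemma GydR_tmul {κ : Type*} (t : Finset κ) (g₁ : κ → A) (g₂ : κ → H) (a' : A) (x y : H)
    (ht : ρrA a' = ∑ j ∈ t, g₁ j ⊗ₜ g₂ j) :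
    GydR raA ρrA a' (x ⊗ₜ y) = ∑ j ∈ t, raA (g₁ j ⊗ₜ x) ⊗ₜ (g₂ j * y) := by
  simp only [GydR, LinearMap.comp_apply, LinearEquiv.coe_coe, TensorProduct.mk_apply]
  rw [ht]
  simp [sum_tmul, map_sum]

lemma long_lr_repr
    (hlong : ∀ (h : H) (m : A),
      ρrA (laA (h ⊗ₜ m)) =
        (TensorProduct.map (laA ∘ₗ (TensorProduct.mk k H A) h) LinearMap.id) (ρrA m))
    {κ : Type*} (t : Finset κ) (g₁ : κ → A) (g₂ : κ → H) (a' : A)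
    (ht : ρrA a' = ∑ j ∈ t, g₁ j ⊗ₜ g₂ j) (x : H) :
    ρrA (laA (x ⊗ₜ a')) = ∑ j ∈ t, laA (x ⊗ₜ g₁ j) ⊗ₜ g₂ j := by
  rw [hlong, ht]
  simp [map_sum]

lemma long_rl_repr
    (hlong : ∀ (m : A) (h : H),
      ρlA (raA (m ⊗ₜ h)) =
        (TensorProduct.map LinearMap.id (raA ∘ₗ (TensorProduct.mk k A H).flip h)) (ρlA m))
    {ι : Type*} (s : Finset ι) (f₁ : ι → H) (f₂ : ι → A) (a : A)
    (hs : ρlA a = ∑ i ∈ s, f₁ i ⊗ₜ f₂ i) (x : H) :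
    ρlA (raA (a ⊗ₜ x)) = ∑ i ∈ s, f₁ i ⊗ₜ raA (f₂ i ⊗ₜ x) := by
  rw [hlong, hs]
  simp [map_sum]

/-- hook a map `F` onto the middle two legs of a fourfold tensor. -/
def midHook {W : Type*} [AddCommMonoid W] [Module k W] (F : H ⊗[k] H →ₗ[k] W) :
    H ⊗[k] (H ⊗[k] (H ⊗[k] H)) →ₗ[k] H ⊗[k] (W ⊗[k] H) :=
  LinearMap.lTensor H (LinearMap.rTensor H F) ∘ₗ
    LinearMap.lTensor H (TensorProduct.assoc k H H H).symm.toLinearMap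

@[simp] lemma midHook_tmul {W : Type*} [AddCommMonoid W] [Module k W]
    (F : H ⊗[k] H →ₗ[k] W) (x y z w : H) :
    midHook F (x ⊗ₜ (y ⊗ₜ (z ⊗ₜ w))) = x ⊗ₜ (F (y ⊗ₜ z) ⊗ₜ w) := by
  simp [midHook]

lemma midHook_fold {W V : Type*} [AddCommMonoid W] [Module k W]
    [AddCommMonoid V] [Module k V]
    (Ξ : H ⊗[k] (W ⊗[k] H) →ₗ[k] V) (F G : H ⊗[k] H →ₗ[k] W)
    {ι : Type*} {e : H} (re : Coalgebra.Repr k e ι)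
    (hFG : F (Coalgebra.comul (R := k) e) = G (Coalgebra.comul (R := k) e)) (x w : H) :
    ∑ m ∈ re.index, (Ξ ∘ₗ midHook F) (x ⊗ₜ (re.left m ⊗ₜ (re.right m ⊗ₜ w)))
    = ∑ m ∈ re.index, (Ξ ∘ₗ midHook G) (x ⊗ₜ (re.left m ⊗ₜ (re.right m ⊗ₜ w))) := by
  have fold : ∀ (F' : H ⊗[k] H →ₗ[k] W),
      ∑ m ∈ re.index, (Ξ ∘ₗ midHook F') (x ⊗ₜ (re.left m ⊗ₜ (re.right m ⊗ₜ w)))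
      = Ξ (x ⊗ₜ ((F' (Coalgebra.comul (R := k) e)) ⊗ₜ w)) := by
    intro F'
    rw [← re.eq, map_sum, sum_tmul, tmul_sum, map_sum]
    exact Finset.sum_congr rfl fun m _ => by simp
  rw [fold F, fold G, hFG]

/-- coupling map for the left action condition. -/
def om1 (φ : 𝒜) (θ : A ⊗[k] H) : H ⊗[k] H →ₗ[k] 𝒜 ⊗[k] A :=
  (TensorProduct.map (ra𝒜 ∘ₗ LinearMap.rTensor H (la𝒜 ∘ₗ (TensorProduct.mk k H 𝒜).flip φ)) laA)
    ∘ₗ (tensorTensorTensorComm k H H H A).toLinearMap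
    ∘ₗ (TensorProduct.mk k (H ⊗[k] H) (H ⊗[k] A)).flip ((TensorProduct.comm k A H) θ)

lemma om1_tmul {κ : Type*} (t : Finset κ) (g₁ : κ → A) (g₂ : κ → H) (φ : 𝒜)
    {θ : A ⊗[k] H} (hθ : θ = ∑ j ∈ t, g₁ j ⊗ₜ g₂ j) (x z : H) :
    om1 la𝒜 ra𝒜 laA φ θ (x ⊗ₜ z)
      = ∑ j ∈ t, ra𝒜 (la𝒜 (x ⊗ₜ φ) ⊗ₜ g₂ j) ⊗ₜ laA (z ⊗ₜ g₁ j) := by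
  simp only [om1, LinearMap.comp_apply, LinearEquiv.coe_coe, TensorProduct.mk_apply,
    LinearMap.flip_apply, hθ]
  simp [map_sum, tmul_sum]

/-- surroundings map for the left action condition. -/
def Xi6 (φ φ' : 𝒜) (θ : A ⊗[k] H) : H ⊗[k] ((H ⊗[k] A) ⊗[k] H) →ₗ[k] 𝒜 ⊗[k] A :=
  (TensorProduct.map ((LinearMap.mul' k 𝒜) ∘ₗ (TensorProduct.comm k 𝒜 𝒜).toLinearMap)
      (LinearMap.mul' k A))
    ∘ₗ (tensorTensorTensorComm k 𝒜 A 𝒜 A).toLinearMap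
    ∘ₗ (TensorProduct.map (LinearMap.rTensor A (la𝒜 ∘ₗ (TensorProduct.mk k H 𝒜).flip φ'))
        (om1 la𝒜 ra𝒜 laA φ θ ∘ₗ (TensorProduct.comm k H H).toLinearMap))
    ∘ₗ (TensorProduct.assoc k (H ⊗[k] A) H H).toLinearMap
    ∘ₗ (TensorProduct.comm k H ((H ⊗[k] A) ⊗[k] H)).toLinearMap

lemma Xi6_tmul {κ : Type*} (t : Finset κ) (g₁ : κ → A) (g₂ : κ → H) (φ φ' : 𝒜)
    {θ : A ⊗[k] H} (hθ : θ = ∑ j ∈ t, g₁ j ⊗ₜ g₂ j) (x z : H) (u : H) (c : A) :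
    Xi6 la𝒜 ra𝒜 laA φ φ' θ (x ⊗ₜ ((u ⊗ₜ c) ⊗ₜ z))
      = ∑ j ∈ t, (ra𝒜 (la𝒜 (x ⊗ₜ φ) ⊗ₜ g₂ j) * la𝒜 (u ⊗ₜ φ')) ⊗ₜ (c * laA (z ⊗ₜ g₁ j)) := by
  simp only [Xi6, LinearMap.comp_apply, LinearEquiv.coe_coe, TensorProduct.comm_tmul,
    TensorProduct.assoc_tmul, TensorProduct.map_tmul]
  rw [om1_tmul la𝒜 ra𝒜 laA t g₁ g₂ φ hθ]
  simp [tmul_sum, map_sum]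

/-- coupling map for the right action condition. -/
def om2 (φ' : 𝒜) (θ : H ⊗[k] A) : H ⊗[k] H →ₗ[k] 𝒜 ⊗[k] A :=
  (TensorProduct.map (la𝒜 ∘ₗ LinearMap.lTensor H (ra𝒜 ∘ₗ TensorProduct.mk k 𝒜 H φ')) raA)
    ∘ₗ (tensorTensorTensorComm k H A H H).toLinearMap
    ∘ₗ (TensorProduct.mk k (H ⊗[k] A) (H ⊗[k] H)) θ

lemma om2_tmul {ι : Type*} (s : Finset ι) (f₁ : ι → H) (f₂ : ι → A) (φ' : 𝒜)
    {θ : H ⊗[k] A} (hθ : θ = ∑ i ∈ s, f₁ i ⊗ₜ f₂ i) (z x : H) :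
    om2 la𝒜 ra𝒜 raA φ' θ (z ⊗ₜ x)
      = ∑ i ∈ s, la𝒜 (f₁ i ⊗ₜ ra𝒜 (φ' ⊗ₜ z)) ⊗ₜ raA (f₂ i ⊗ₜ x) := by
  simp only [om2, LinearMap.comp_apply, LinearEquiv.coe_coe, TensorProduct.mk_apply, hθ]
  simp [map_sum, sum_tmul]

/-- surroundings map for the right action condition. -/
def Xi8 (φ φ' : 𝒜) (θ : H ⊗[k] A) : H ⊗[k] ((A ⊗[k] H) ⊗[k] H) →ₗ[k] 𝒜 ⊗[k] A :=
  (TensorProduct.map (LinearMap.mul' k 𝒜)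
      ((LinearMap.mul' k A) ∘ₗ (TensorProduct.comm k A A).toLinearMap))
    ∘ₗ (tensorTensorTensorComm k 𝒜 A 𝒜 A).toLinearMap
    ∘ₗ (TensorProduct.map
        ((TensorProduct.comm k A 𝒜).toLinearMap
          ∘ₗ LinearMap.lTensor A (ra𝒜 ∘ₗ TensorProduct.mk k 𝒜 H φ))
        (om2 la𝒜 ra𝒜 raA φ' θ))
    ∘ₗ (TensorProduct.assoc k (A ⊗[k] H) H H).toLinearMap
    ∘ₗ (TensorProduct.comm k H ((A ⊗[k] H) ⊗[k] H)).toLinearMap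

lemma Xi8_tmul {ι : Type*} (s : Finset ι) (f₁ : ι → H) (f₂ : ι → A) (φ φ' : 𝒜)
    {θ : H ⊗[k] A} (hθ : θ = ∑ i ∈ s, f₁ i ⊗ₜ f₂ i) (x z : H) (e : A) (w : H) :
    Xi8 la𝒜 ra𝒜 raA φ φ' θ (x ⊗ₜ ((e ⊗ₜ w) ⊗ₜ z))
      = ∑ i ∈ s, (ra𝒜 (φ ⊗ₜ w) * la𝒜 (f₁ i ⊗ₜ ra𝒜 (φ' ⊗ₜ z))) ⊗ₜ (raA (f₂ i ⊗ₜ x) * e) := by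
  simp only [Xi8, LinearMap.comp_apply, LinearEquiv.coe_coe, TensorProduct.comm_tmul,
    TensorProduct.assoc_tmul, TensorProduct.map_tmul]
  rw [om2_tmul la𝒜 ra𝒜 raA s f₁ f₂ φ' hθ]
  simp [tmul_sum, map_sum]

end GadgetAux

end LR


namespace LR

set_option maxHeartbeats 4000000
set_option synthInstance.maxHeartbeats 400000

open Coalgebra in
/-- If `A` is an algebra in `ℒℛ(H)` and `𝒜` an `H`-bimodule algebra,
then the L-R-smash product `𝒜 ♮ A` is an `H`-bimodule algebra with the actions
`h·(φ ♮ a) = h₁·φ ♮ h₂·a` and `(φ ♮ a)·h = φ·h₂ ♮ a·h₁`. -/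
theorem lr_smash_product_bimodule_algebra
    {k : Type*} [Field k] {H A 𝒜 : Type*}
    [Ring H] [Bialgebra k H] [Ring A] [Algebra k A] [Ring 𝒜] [Algebra k 𝒜]
    (la𝒜 : H ⊗[k] 𝒜 →ₗ[k] 𝒜) (ra𝒜 : 𝒜 ⊗[k] H →ₗ[k] 𝒜)
    (h𝒜 : IsBimoduleAlgebra (LinearMap.mul' k 𝒜) (1 : 𝒜) la𝒜 ra𝒜)
    (laA : H ⊗[k] A →ₗ[k] A) (raA : A ⊗[k] H →ₗ[k] A)
    (ρlA : A →ₗ[k] H ⊗[k] A) (ρrA : A →ₗ[k] A ⊗[k] H)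
    (hA : IsYDLAlgebra laA raA ρlA ρrA) :
    IsBimoduleAlgebra
      (lrMulGen (LinearMap.mul' k 𝒜) (LinearMap.mul' k A)
        (smashQ ra𝒜 ρrA) (smashR la𝒜 ρlA))
      ((1 : 𝒜) ⊗ₜ[k] (1 : A)) (Lact la𝒜 laA) (Ract ra𝒜 raA) := by
  obtain ⟨A1, A2, A3, A4, A5, A6, A7, A8, A9⟩ := h𝒜
  obtain ⟨hbmA, hbcA, ydll, longlr, ydrr, longrl⟩ := hA
  obtain ⟨B1, B2, B3, B4, B5, B6, B7, B8, B9⟩ := hbmA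
  have laMul𝒜 : ∀ {h : H} (r : Coalgebra.Repr k h (H × H)) (x y : 𝒜),
      la𝒜 (h ⊗ₜ (x * y)) = ∑ i ∈ r.index, la𝒜 (r.left i ⊗ₜ x) * la𝒜 (r.right i ⊗ₜ y) := by
    intro h r x y
    have h6 := A6 h x y
    rw [LinearMap.mul'_apply] at h6
    rw [h6, mulform_left (LinearMap.mul' k 𝒜) la𝒜 r x y]
    simp [LinearMap.mul'_apply]
  have raMul𝒜 : ∀ {h : H} (r : Coalgebra.Repr k h (H × H)) (x y : 𝒜),
      ra𝒜 ((x * y) ⊗ₜ h) = ∑ i ∈ r.index, ra𝒜 (x ⊗ₜ r.left i) * ra𝒜 (y ⊗ₜ r.right i) := by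
    intro h r x y
    have h8 := A8 h x y
    rw [LinearMap.mul'_apply] at h8
    rw [h8, mulform_right (LinearMap.mul' k 𝒜) ra𝒜 r x y]
    simp [LinearMap.mul'_apply]
  have laMulA : ∀ {h : H} (r : Coalgebra.Repr k h (H × H)) (x y : A),
      laA (h ⊗ₜ (x * y)) = ∑ i ∈ r.index, laA (r.left i ⊗ₜ x) * laA (r.right i ⊗ₜ y) := by
    intro h r x y
    have h6 := B6 h x y
    rw [LinearMap.mul'_apply] at h6
    rw [h6, mulform_left (LinearMap.mul' k A) laA r x y]
    simp [LinearMap.mul'_apply]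
  have raMulA : ∀ {h : H} (r : Coalgebra.Repr k h (H × H)) (x y : A),
      raA ((x * y) ⊗ₜ h) = ∑ i ∈ r.index, raA (x ⊗ₜ r.left i) * raA (y ⊗ₜ r.right i) := by
    intro h r x y
    have h8 := B8 h x y
    rw [LinearMap.mul'_apply] at h8
    rw [h8, mulform_right (LinearMap.mul' k A) raA r x y]
    simp [LinearMap.mul'_apply]
  refine ⟨?_, ?_, ?_, ?_, ?_, ?_, ?_, ?_, ?_⟩
  · -- (1) unit of the left action
    intro m
    induction m using TensorProduct.induction_on with
    | zero => simp
    | add m₁ m₂ h₁ h₂ => simp only [tmul_add, map_add, h₁, h₂]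
    | tmul φ a =>
      rw [Lact_tmul la𝒜 laA (reprOne (k := k) (H := H)) φ a]
      simp only [reprOne_index, reprOne_left, reprOne_right, Finset.sum_singleton, A1, B1]
  · -- (2) associativity of the left action
    intro g h m
    induction m using TensorProduct.induction_on with
    | zero => simp
    | add m₁ m₂ h₁ h₂ => simp only [tmul_add, map_add, h₁, h₂]
    | tmul φ a =>
      rw [Lact_tmul_mul la𝒜 laA g h (ℛ k g) (ℛ k h) φ a,
        Lact_tmul la𝒜 laA (ℛ k h) φ a, tmul_sum, map_sum]
      simp only [Lact_tmul la𝒜 laA (ℛ k g)]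
      rw [Finset.sum_comm (s := (ℛ k g).index) (t := (ℛ k h).index)]
      refine Finset.sum_congr rfl fun j _ => Finset.sum_congr rfl fun i _ => ?_
      rw [A2, B2]
  · -- (3) unit of the right action
    intro m
    induction m using TensorProduct.induction_on with
    | zero => simp
    | add m₁ m₂ h₁ h₂ => simp only [add_tmul, map_add, h₁, h₂]
    | tmul φ a =>
      rw [Ract_tmul ra𝒜 raA (reprOne (k := k) (H := H)) φ a]
      simp only [reprOne_index, reprOne_left, reprOne_right, Finset.sum_singleton, A3, B3]
  · -- (4) associativity of the right action
    intro m g h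
    induction m using TensorProduct.induction_on with
    | zero => simp
    | add m₁ m₂ h₁ h₂ => simp only [add_tmul, map_add, h₁, h₂]
    | tmul φ a =>
      rw [Ract_tmul_mul ra𝒜 raA g h (ℛ k g) (ℛ k h) φ a,
        Ract_tmul ra𝒜 raA (ℛ k g) φ a, sum_tmul, map_sum]
      simp only [Ract_tmul ra𝒜 raA (ℛ k h)]
      refine Finset.sum_congr rfl fun i _ => Finset.sum_congr rfl fun j _ => ?_
      rw [A4, B4]
  · -- (5) compatibility of the two actions
    intro h m g
    induction m using TensorProduct.induction_on with
    | zero => simp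
    | add m₁ m₂ h₁ h₂ =>
      simp only [tmul_add, add_tmul, map_add, h₁, h₂]
    | tmul φ a =>
      rw [Lact_tmul la𝒜 laA (ℛ k h) φ a, sum_tmul, map_sum]
      simp only [Ract_tmul ra𝒜 raA (ℛ k g)]
      rw [tmul_sum, map_sum]
      simp only [Lact_tmul la𝒜 laA (ℛ k h)]
      rw [Finset.sum_comm (s := (ℛ k h).index) (t := (ℛ k g).index)]
      refine Finset.sum_congr rfl fun j _ => Finset.sum_congr rfl fun i _ => ?_
      rw [A5, B5]
  · -- (6) multiplicativity of the left action
    intro h x y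
    rw [mulform_left (lrMulGen (LinearMap.mul' k 𝒜) (LinearMap.mul' k A)
        (smashQ ra𝒜 ρrA) (smashR la𝒜 ρlA)) (Lact la𝒜 laA) (ℛ k h) x y]
    induction x using TensorProduct.induction_on with
    | zero => simp
    | add x₁ x₂ hx₁ hx₂ =>
      simp only [add_tmul, tmul_add, map_add, Finset.sum_add_distrib] at hx₁ hx₂ ⊢
      rw [hx₁, hx₂]
    | tmul φ a =>
      induction y using TensorProduct.induction_on with
      | zero => simp
      | add y₁ y₂ hy₁ hy₂ =>
        simp only [add_tmul, tmul_add, map_add, Finset.sum_add_distrib] at hy₁ hy₂ ⊢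
        rw [hy₁, hy₂]
      | tmul φ' a' =>
        obtain ⟨S, hS⟩ := TensorProduct.exists_finset (ρlA a)
        obtain ⟨T, hT⟩ := TensorProduct.exists_finset (ρrA a')
        set r : Coalgebra.Repr k h (H × H) := ℛ k h with hrdef
        have P1 : ∀ H1 H2 H3 H4 : H,
            lrMulGen (LinearMap.mul' k 𝒜) (LinearMap.mul' k A) (smashQ ra𝒜 ρrA)
                (smashR la𝒜 ρlA)
              ((la𝒜 (H1 ⊗ₜ φ) ⊗ₜ laA (H2 ⊗ₜ a)) ⊗ₜ (la𝒜 (H3 ⊗ₜ φ') ⊗ₜ laA (H4 ⊗ₜ a')))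
            = (Xi6 la𝒜 ra𝒜 laA φ φ' (ρrA a') ∘ₗ midHook (FydL laA ρlA a))
                (H1 ⊗ₜ (H2 ⊗ₜ (H3 ⊗ₜ H4))) := by
          intro H1 H2 H3 H4
          obtain ⟨W, hW⟩ := TensorProduct.exists_finset (ρlA (laA (H2 ⊗ₜ a)))
          rw [mulSmash la𝒜 ra𝒜 ρlA ρrA W T Prod.fst Prod.snd
              (fun v => laA (H4 ⊗ₜ v.1)) Prod.snd (la𝒜 (H1 ⊗ₜ φ)) (la𝒜 (H3 ⊗ₜ φ'))
              (laA (H2 ⊗ₜ a)) (laA (H4 ⊗ₜ a')) hW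
              (long_lr_repr laA ρrA longlr T Prod.fst Prod.snd a' hT H4)]
          rw [LinearMap.comp_apply, midHook_tmul,
            FydL_tmul laA ρlA W Prod.fst Prod.snd a H2 H3 hW, sum_tmul, tmul_sum, map_sum]
          simp only [Xi6_tmul la𝒜 ra𝒜 laA T Prod.fst Prod.snd φ φ' hT]
          refine Finset.sum_congr rfl fun w _ => Finset.sum_congr rfl fun v _ => ?_
          rw [← A2]
        have P2 : ∀ H1 H2 H3 H4 : H,
            (Xi6 la𝒜 ra𝒜 laA φ φ' (ρrA a') ∘ₗ midHook (GydL laA ρlA a))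
                (H1 ⊗ₜ (H2 ⊗ₜ (H3 ⊗ₜ H4)))
            = ∑ u ∈ S, ∑ v ∈ T,
                (ra𝒜 (la𝒜 (H1 ⊗ₜ φ) ⊗ₜ v.2) * la𝒜 ((H2 * u.1) ⊗ₜ φ')) ⊗ₜ
                  (laA (H3 ⊗ₜ u.2) * laA (H4 ⊗ₜ v.1)) := by
          intro H1 H2 H3 H4
          rw [LinearMap.comp_apply, midHook_tmul,
            GydL_tmul laA ρlA S Prod.fst Prod.snd a H2 H3 hS, sum_tmul, tmul_sum, map_sum]
          simp only [Xi6_tmul la𝒜 ra𝒜 laA T Prod.fst Prod.snd φ φ' hT]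
        trans (∑ i ∈ r.index, ∑ j ∈ (ℛ k (r.left i)).index,
            ∑ j' ∈ (ℛ k (r.right i)).index, ∑ u ∈ S, ∑ v ∈ T,
            (ra𝒜 (la𝒜 ((ℛ k (r.left i)).left j ⊗ₜ φ) ⊗ₜ v.2) *
                la𝒜 (((ℛ k (r.left i)).right j * u.1) ⊗ₜ φ')) ⊗ₜ
              (laA ((ℛ k (r.right i)).left j' ⊗ₜ u.2) *
                laA ((ℛ k (r.right i)).right j' ⊗ₜ v.1)))
        · -- left-hand side equals the canonical quintuple sum
          rw [mulSmash la𝒜 ra𝒜 ρlA ρrA S T Prod.fst Prod.snd Prod.fst Prod.snd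
            φ φ' a a' hS hT]
          simp only [tmul_sum, map_sum]
          trans (∑ u ∈ S, ∑ v ∈ T, ∑ i ∈ r.index, ∑ j ∈ (ℛ k (r.left i)).index,
              ∑ j' ∈ (ℛ k (r.right i)).index,
              (ra𝒜 (la𝒜 ((ℛ k (r.left i)).left j ⊗ₜ φ) ⊗ₜ v.2) *
                  la𝒜 (((ℛ k (r.left i)).right j * u.1) ⊗ₜ φ')) ⊗ₜ
                (laA ((ℛ k (r.right i)).left j' ⊗ₜ u.2) *
                  laA ((ℛ k (r.right i)).right j' ⊗ₜ v.1)))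
          · refine Finset.sum_congr rfl fun u _ => Finset.sum_congr rfl fun v _ => ?_
            rw [Lact_tmul la𝒜 laA r]
            refine Finset.sum_congr rfl fun i _ => ?_
            rw [laMul𝒜 (ℛ k (r.left i)), laMulA (ℛ k (r.right i)), sum_tmul]
            simp only [tmul_sum]
            refine Finset.sum_congr rfl fun j _ => Finset.sum_congr rfl fun j' _ => ?_
            rw [← A5, ← A2]
          · trans (∑ u ∈ S, ∑ i ∈ r.index, ∑ j ∈ (ℛ k (r.left i)).index,
                ∑ j' ∈ (ℛ k (r.right i)).index, ∑ v ∈ T,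
                (ra𝒜 (la𝒜 ((ℛ k (r.left i)).left j ⊗ₜ φ) ⊗ₜ v.2) *
                    la𝒜 (((ℛ k (r.left i)).right j * u.1) ⊗ₜ φ')) ⊗ₜ
                  (laA ((ℛ k (r.right i)).left j' ⊗ₜ u.2) *
                    laA ((ℛ k (r.right i)).right j' ⊗ₜ v.1)))
            · exact Finset.sum_congr rfl fun u _ => sum_comm3 T r.index _ _ _
            · exact sum_comm3 S r.index _ _ _
        · -- right-hand side equals the canonical quintuple sum
          symm
          trans (∑ i ∈ r.index, ∑ j ∈ (ℛ k (r.left i)).index,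
              ∑ j' ∈ (ℛ k (r.right i)).index,
              (Xi6 la𝒜 ra𝒜 laA φ φ' (ρrA a') ∘ₗ midHook (FydL laA ρlA a))
                ((ℛ k (r.left i)).left j ⊗ₜ ((ℛ k (r.left i)).right j ⊗ₜ
                  ((ℛ k (r.right i)).left j' ⊗ₜ (ℛ k (r.right i)).right j'))))
          · refine Finset.sum_congr rfl fun i _ => ?_
            rw [Lact_tmul la𝒜 laA (ℛ k (r.left i)) φ a,
              Lact_tmul la𝒜 laA (ℛ k (r.right i)) φ' a', sum_tmul]
            simp only [tmul_sum, map_sum]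
            exact Finset.sum_congr rfl fun j _ => Finset.sum_congr rfl fun j' _ =>
              P1 _ _ _ _
          · trans (∑ i ∈ r.index, ∑ j ∈ (ℛ k (r.right i)).index,
                ∑ m ∈ (ℛ k ((ℛ k (r.right i)).left j)).index,
                (Xi6 la𝒜 ra𝒜 laA φ φ' (ρrA a') ∘ₗ midHook (FydL laA ρlA a))
                  (r.left i ⊗ₜ ((ℛ k ((ℛ k (r.right i)).left j)).left m ⊗ₜ
                    ((ℛ k ((ℛ k (r.right i)).left j)).right m ⊗ₜ
                      (ℛ k (r.right i)).right j))))
            · exact shape_swap _ r (fun i => ℛ k (r.left i)) (fun i => ℛ k (r.right i))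
                (fun i j => ℛ k ((ℛ k (r.right i)).left j))
            · trans (∑ i ∈ r.index, ∑ j ∈ (ℛ k (r.right i)).index,
                  ∑ m ∈ (ℛ k ((ℛ k (r.right i)).left j)).index,
                  (Xi6 la𝒜 ra𝒜 laA φ φ' (ρrA a') ∘ₗ midHook (GydL laA ρlA a))
                    (r.left i ⊗ₜ ((ℛ k ((ℛ k (r.right i)).left j)).left m ⊗ₜ
                      ((ℛ k ((ℛ k (r.right i)).left j)).right m ⊗ₜ
                        (ℛ k (r.right i)).right j))))
              · refine Finset.sum_congr rfl fun i _ => Finset.sum_congr rfl fun j _ => ?_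
                exact midHook_fold (Xi6 la𝒜 ra𝒜 laA φ φ' (ρrA a'))
                  (FydL laA ρlA a) (GydL laA ρlA a)
                  (ℛ k ((ℛ k (r.right i)).left j))
                  (FydL_comul_eq laA ρlA a ydll ((ℛ k (r.right i)).left j))
                  (r.left i) ((ℛ k (r.right i)).right j)
              · trans (∑ i ∈ r.index, ∑ j ∈ (ℛ k (r.left i)).index,
                    ∑ j' ∈ (ℛ k (r.right i)).index,
                    (Xi6 la𝒜 ra𝒜 laA φ φ' (ρrA a') ∘ₗ midHook (GydL laA ρlA a))
                      ((ℛ k (r.left i)).left j ⊗ₜ ((ℛ k (r.left i)).right j ⊗ₜ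
                        ((ℛ k (r.right i)).left j' ⊗ₜ (ℛ k (r.right i)).right j'))))
                · exact (shape_swap _ r (fun i => ℛ k (r.left i))
                    (fun i => ℛ k (r.right i))
                    (fun i j => ℛ k ((ℛ k (r.right i)).left j))).symm
                · refine Finset.sum_congr rfl fun i _ => Finset.sum_congr rfl fun j _ =>
                    Finset.sum_congr rfl fun j' _ => ?_
                  rw [P2]
  · -- (7) left action on the unit
    intro h
    rw [Lact_tmul la𝒜 laA (ℛ k h)]
    have hcount : ∑ i ∈ (ℛ k h).index,
        Coalgebra.counit (R := k) ((ℛ k h).right i) *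
          Coalgebra.counit (R := k) ((ℛ k h).left i)
        = Coalgebra.counit (R := k) h := by
      simpa [smul_eq_mul] using sum_smul_counit (Coalgebra.counit (R := k)) (ℛ k h)
    calc ∑ i ∈ (ℛ k h).index, la𝒜 ((ℛ k h).left i ⊗ₜ 1) ⊗ₜ laA ((ℛ k h).right i ⊗ₜ 1)
        = ∑ i ∈ (ℛ k h).index,
            (Coalgebra.counit (R := k) ((ℛ k h).right i) *
              Coalgebra.counit (R := k) ((ℛ k h).left i)) • ((1 : 𝒜) ⊗ₜ[k] (1 : A)) := by
          refine Finset.sum_congr rfl fun i _ => ?_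
          rw [A7, B7, tmul_smul, ← smul_tmul', smul_smul]
      _ = _ := by rw [← Finset.sum_smul, hcount]
  · -- (8) multiplicativity of the right action
    intro h x y
    rw [mulform_right (lrMulGen (LinearMap.mul' k 𝒜) (LinearMap.mul' k A)
        (smashQ ra𝒜 ρrA) (smashR la𝒜 ρlA)) (Ract ra𝒜 raA) (ℛ k h) x y]
    induction x using TensorProduct.induction_on with
    | zero => simp
    | add x₁ x₂ hx₁ hx₂ =>
      simp only [add_tmul, tmul_add, map_add, Finset.sum_add_distrib] at hx₁ hx₂ ⊢
      rw [hx₁, hx₂]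
    | tmul φ a =>
      induction y using TensorProduct.induction_on with
      | zero => simp
      | add y₁ y₂ hy₁ hy₂ =>
        simp only [add_tmul, tmul_add, map_add, Finset.sum_add_distrib] at hy₁ hy₂ ⊢
        rw [hy₁, hy₂]
      | tmul φ' a' =>
        obtain ⟨S, hS⟩ := TensorProduct.exists_finset (ρlA a)
        obtain ⟨T, hT⟩ := TensorProduct.exists_finset (ρrA a')
        set r : Coalgebra.Repr k h (H × H) := ℛ k h with hrdef
        have P1 : ∀ H1 H2 H3 H4 : H,
            lrMulGen (LinearMap.mul' k 𝒜) (LinearMap.mul' k A) (smashQ ra𝒜 ρrA)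
                (smashR la𝒜 ρlA)
              ((ra𝒜 (φ ⊗ₜ H2) ⊗ₜ raA (a ⊗ₜ H1)) ⊗ₜ (ra𝒜 (φ' ⊗ₜ H4) ⊗ₜ raA (a' ⊗ₜ H3)))
            = (Xi8 la𝒜 ra𝒜 raA φ φ' (ρlA a) ∘ₗ midHook (FydR raA ρrA a'))
                (H1 ⊗ₜ (H2 ⊗ₜ (H3 ⊗ₜ H4))) := by
          intro H1 H2 H3 H4
          obtain ⟨W, hW⟩ := TensorProduct.exists_finset (ρrA (raA (a' ⊗ₜ H3)))
          rw [mulSmash la𝒜 ra𝒜 ρlA ρrA S W Prod.fst (fun u => raA (u.2 ⊗ₜ H1))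
              Prod.fst Prod.snd (ra𝒜 (φ ⊗ₜ H2)) (ra𝒜 (φ' ⊗ₜ H4)) (raA (a ⊗ₜ H1))
              (raA (a' ⊗ₜ H3))
              (long_rl_repr raA ρlA longrl S Prod.fst Prod.snd a hS H1) hW]
          rw [LinearMap.comp_apply, midHook_tmul,
            FydR_tmul raA ρrA W Prod.fst Prod.snd a' H2 H3 hW, sum_tmul, tmul_sum, map_sum]
          simp only [Xi8_tmul la𝒜 ra𝒜 raA S Prod.fst Prod.snd φ φ' hS]
          rw [Finset.sum_comm (s := S) (t := W)]
          refine Finset.sum_congr rfl fun w _ => Finset.sum_congr rfl fun u _ => ?_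
          rw [← A4]
        have P2 : ∀ H1 H2 H3 H4 : H,
            (Xi8 la𝒜 ra𝒜 raA φ φ' (ρlA a) ∘ₗ midHook (GydR raA ρrA a'))
                (H1 ⊗ₜ (H2 ⊗ₜ (H3 ⊗ₜ H4)))
            = ∑ v ∈ T, ∑ u ∈ S,
                (ra𝒜 (φ ⊗ₜ (v.2 * H3)) * la𝒜 (u.1 ⊗ₜ ra𝒜 (φ' ⊗ₜ H4))) ⊗ₜ
                  (raA (u.2 ⊗ₜ H1) * raA (v.1 ⊗ₜ H2)) := by
          intro H1 H2 H3 H4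
          rw [LinearMap.comp_apply, midHook_tmul,
            GydR_tmul raA ρrA T Prod.fst Prod.snd a' H2 H3 hT, sum_tmul, tmul_sum, map_sum]
          simp only [Xi8_tmul la𝒜 ra𝒜 raA S Prod.fst Prod.snd φ φ' hS]
        trans (∑ i ∈ r.index, ∑ j ∈ (ℛ k (r.left i)).index,
            ∑ j' ∈ (ℛ k (r.right i)).index, ∑ v ∈ T, ∑ u ∈ S,
            (ra𝒜 (φ ⊗ₜ (v.2 * (ℛ k (r.right i)).left j')) *
                la𝒜 (u.1 ⊗ₜ ra𝒜 (φ' ⊗ₜ (ℛ k (r.right i)).right j'))) ⊗ₜ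
              (raA (u.2 ⊗ₜ (ℛ k (r.left i)).left j) *
                raA (v.1 ⊗ₜ (ℛ k (r.left i)).right j)))
        · -- left-hand side equals the canonical quintuple sum
          rw [mulSmash la𝒜 ra𝒜 ρlA ρrA S T Prod.fst Prod.snd Prod.fst Prod.snd
            φ φ' a a' hS hT]
          simp only [sum_tmul, map_sum]
          trans (∑ u ∈ S, ∑ v ∈ T, ∑ i ∈ r.index, ∑ j ∈ (ℛ k (r.left i)).index,
              ∑ j' ∈ (ℛ k (r.right i)).index,
              (ra𝒜 (φ ⊗ₜ (v.2 * (ℛ k (r.right i)).left j')) *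
                  la𝒜 (u.1 ⊗ₜ ra𝒜 (φ' ⊗ₜ (ℛ k (r.right i)).right j'))) ⊗ₜ
                (raA (u.2 ⊗ₜ (ℛ k (r.left i)).left j) *
                  raA (v.1 ⊗ₜ (ℛ k (r.left i)).right j)))
          · refine Finset.sum_congr rfl fun u _ => Finset.sum_congr rfl fun v _ => ?_
            rw [Ract_tmul ra𝒜 raA r]
            refine Finset.sum_congr rfl fun i _ => ?_
            rw [raMul𝒜 (ℛ k (r.right i)), raMulA (ℛ k (r.left i)), sum_tmul]
            simp only [tmul_sum]
            rw [Finset.sum_comm (s := (ℛ k (r.right i)).index)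
              (t := (ℛ k (r.left i)).index)]
            refine Finset.sum_congr rfl fun j _ => Finset.sum_congr rfl fun j' _ => ?_
            rw [← A4, A5]
          · trans (∑ v ∈ T, ∑ u ∈ S, ∑ i ∈ r.index, ∑ j ∈ (ℛ k (r.left i)).index,
                ∑ j' ∈ (ℛ k (r.right i)).index,
                (ra𝒜 (φ ⊗ₜ (v.2 * (ℛ k (r.right i)).left j')) *
                    la𝒜 (u.1 ⊗ₜ ra𝒜 (φ' ⊗ₜ (ℛ k (r.right i)).right j'))) ⊗ₜ
                  (raA (u.2 ⊗ₜ (ℛ k (r.left i)).left j) *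
                    raA (v.1 ⊗ₜ (ℛ k (r.left i)).right j)))
            · exact Finset.sum_comm
            · trans (∑ v ∈ T, ∑ i ∈ r.index, ∑ j ∈ (ℛ k (r.left i)).index,
                  ∑ j' ∈ (ℛ k (r.right i)).index, ∑ u ∈ S,
                  (ra𝒜 (φ ⊗ₜ (v.2 * (ℛ k (r.right i)).left j')) *
                      la𝒜 (u.1 ⊗ₜ ra𝒜 (φ' ⊗ₜ (ℛ k (r.right i)).right j'))) ⊗ₜ
                    (raA (u.2 ⊗ₜ (ℛ k (r.left i)).left j) *
                      raA (v.1 ⊗ₜ (ℛ k (r.left i)).right j)))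
              · exact Finset.sum_congr rfl fun v _ => sum_comm3 S r.index _ _ _
              · trans (∑ i ∈ r.index, ∑ j ∈ (ℛ k (r.left i)).index,
                    ∑ j' ∈ (ℛ k (r.right i)).index, ∑ v ∈ T, ∑ u ∈ S,
                    (ra𝒜 (φ ⊗ₜ (v.2 * (ℛ k (r.right i)).left j')) *
                        la𝒜 (u.1 ⊗ₜ ra𝒜 (φ' ⊗ₜ (ℛ k (r.right i)).right j'))) ⊗ₜ
                      (raA (u.2 ⊗ₜ (ℛ k (r.left i)).left j) *
                        raA (v.1 ⊗ₜ (ℛ k (r.left i)).right j)))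
                · exact sum_comm3 T r.index _ _ _
                · rfl
        · -- right-hand side equals the canonical quintuple sum
          symm
          trans (∑ i ∈ r.index, ∑ j ∈ (ℛ k (r.left i)).index,
              ∑ j' ∈ (ℛ k (r.right i)).index,
              (Xi8 la𝒜 ra𝒜 raA φ φ' (ρlA a) ∘ₗ midHook (FydR raA ρrA a'))
                ((ℛ k (r.left i)).left j ⊗ₜ ((ℛ k (r.left i)).right j ⊗ₜ
                  ((ℛ k (r.right i)).left j' ⊗ₜ (ℛ k (r.right i)).right j'))))
          · refine Finset.sum_congr rfl fun i _ => ?_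
            rw [Ract_tmul ra𝒜 raA (ℛ k (r.left i)) φ a,
              Ract_tmul ra𝒜 raA (ℛ k (r.right i)) φ' a', sum_tmul]
            simp only [tmul_sum, map_sum]
            exact Finset.sum_congr rfl fun j _ => Finset.sum_congr rfl fun j' _ =>
              P1 _ _ _ _
          · trans (∑ i ∈ r.index, ∑ j ∈ (ℛ k (r.right i)).index,
                ∑ m ∈ (ℛ k ((ℛ k (r.right i)).left j)).index,
                (Xi8 la𝒜 ra𝒜 raA φ φ' (ρlA a) ∘ₗ midHook (FydR raA ρrA a'))
                  (r.left i ⊗ₜ ((ℛ k ((ℛ k (r.right i)).left j)).left m ⊗ₜ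
                    ((ℛ k ((ℛ k (r.right i)).left j)).right m ⊗ₜ
                      (ℛ k (r.right i)).right j))))
            · exact shape_swap _ r (fun i => ℛ k (r.left i)) (fun i => ℛ k (r.right i))
                (fun i j => ℛ k ((ℛ k (r.right i)).left j))
            · trans (∑ i ∈ r.index, ∑ j ∈ (ℛ k (r.right i)).index,
                  ∑ m ∈ (ℛ k ((ℛ k (r.right i)).left j)).index,
                  (Xi8 la𝒜 ra𝒜 raA φ φ' (ρlA a) ∘ₗ midHook (GydR raA ρrA a'))
                    (r.left i ⊗ₜ ((ℛ k ((ℛ k (r.right i)).left j)).left m ⊗ₜ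
                      ((ℛ k ((ℛ k (r.right i)).left j)).right m ⊗ₜ
                        (ℛ k (r.right i)).right j))))
              · refine Finset.sum_congr rfl fun i _ => Finset.sum_congr rfl fun j _ => ?_
                exact midHook_fold (Xi8 la𝒜 ra𝒜 raA φ φ' (ρlA a))
                  (FydR raA ρrA a') (GydR raA ρrA a')
                  (ℛ k ((ℛ k (r.right i)).left j))
                  (FydR_comul_eq raA ρrA a' ydrr ((ℛ k (r.right i)).left j))
                  (r.left i) ((ℛ k (r.right i)).right j)
              · trans (∑ i ∈ r.index, ∑ j ∈ (ℛ k (r.left i)).index,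
                    ∑ j' ∈ (ℛ k (r.right i)).index,
                    (Xi8 la𝒜 ra𝒜 raA φ φ' (ρlA a) ∘ₗ midHook (GydR raA ρrA a'))
                      ((ℛ k (r.left i)).left j ⊗ₜ ((ℛ k (r.left i)).right j ⊗ₜ
                        ((ℛ k (r.right i)).left j' ⊗ₜ (ℛ k (r.right i)).right j'))))
                · exact (shape_swap _ r (fun i => ℛ k (r.left i))
                    (fun i => ℛ k (r.right i))
                    (fun i j => ℛ k ((ℛ k (r.right i)).left j))).symm
                · refine Finset.sum_congr rfl fun i _ => Finset.sum_congr rfl fun j _ =>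
                    Finset.sum_congr rfl fun j' _ => ?_
                  rw [P2]
  · -- (9) right action on the unit
    intro h
    rw [Ract_tmul ra𝒜 raA (ℛ k h)]
    have hcount : ∑ i ∈ (ℛ k h).index,
        Coalgebra.counit (R := k) ((ℛ k h).left i) *
          Coalgebra.counit (R := k) ((ℛ k h).right i)
        = Coalgebra.counit (R := k) h := by
      simpa [smul_eq_mul] using sum_counit_smul (Coalgebra.counit (R := k)) (ℛ k h)
    calc ∑ i ∈ (ℛ k h).index, ra𝒜 (1 ⊗ₜ (ℛ k h).right i) ⊗ₜ raA (1 ⊗ₜ (ℛ k h).left i)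
        = ∑ i ∈ (ℛ k h).index,
            (Coalgebra.counit (R := k) ((ℛ k h).left i) *
              Coalgebra.counit (R := k) ((ℛ k h).right i)) • ((1 : 𝒜) ⊗ₜ[k] (1 : A)) := by
          refine Finset.sum_congr rfl fun i _ => ?_
          rw [A9, B9, tmul_smul, ← smul_tmul', smul_smul]
      _ = _ := by rw [← Finset.sum_smul, hcount]

end LR
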